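/- Let S be a control semigroup and let X be a metric space with X = A ∪ B, where A and B carry the induced metric. Then asdim_S X = max{asdim_S A, asdim_S B} (as elements of ℕ ∪ {∞}). -/

import Mathlib

open Filter Set Metric Topology
open scoped NNReal ENNReal

/-- A large-scale (asymptotic) dim-control function: continuous, increasing,
eventually at least the identity, tending to infinity. -/
def IsLSControl (f : ℝ≥0 → ℝ≥0) : Prop :=
  Continuous f ∧ Monotone f ∧ (∀ᶠ x in atTop, x ≤ f x) ∧ Tendsto f atTop atTop

/-- Asymptotically linear: coincides with a linear function on a neighborhood of infinity. -/
def IsAsympLinear (f : ℝ≥0 → ℝ≥0) : Prop :=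
  ∃ a b : ℝ≥0, ∀ᶠ x in atTop, f x = a * x + b

/-- A (large-scale) control semigroup. -/
def IsControlSemigroup (S : Set (ℝ≥0 → ℝ≥0)) : Prop :=
  (∀ f ∈ S, IsLSControl f) ∧
  (∀ f, IsLSControl f → IsAsympLinear f → f ∈ S) ∧
  (∀ f ∈ S, ∀ g ∈ S, f ∘ g ∈ S)

/-- A family of subsets is `s`-disjoint if distinct members are at distance `> s`. -/
def SDisjoint {X : Type*} [MetricSpace X] (s : ℝ≥0) (𝒰 : Set (Set X)) : Prop :=
  ∀ U ∈ 𝒰, ∀ V ∈ 𝒰, U ≠ V → ∀ x ∈ U, ∀ y ∈ V, (s : ℝ) < dist x y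

/-- A family of subsets is `D`-bounded if each member has diameter at most `D`. -/
def BoundedBy {X : Type*} [MetricSpace X] (D : ℝ≥0) (𝒰 : Set (Set X)) : Prop :=
  ∀ U ∈ 𝒰, EMetric.diam U ≤ (D : ℝ≥0∞)

/-- `asdim_S X ≤ n`. -/
def ASDimLE (S : Set (ℝ≥0 → ℝ≥0)) (X : Type*) [MetricSpace X] (n : ℕ) : Prop :=
  ∃ f ∈ S, ∃ s₀ : ℝ≥0, ∀ s : ℝ≥0, s₀ ≤ s →
    ∃ 𝒰 : Fin (n + 1) → Set (Set X),
      (⋃ i, ⋃₀ 𝒰 i) = univ ∧ ∀ i, SDisjoint s (𝒰 i) ∧ BoundedBy (f s) (𝒰 i)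

/-- The `S`-controlled asymptotic dimension, as an element of `ℕ∞`. -/
noncomputable def ASDim (S : Set (ℝ≥0 → ℝ≥0)) (X : Type*) [MetricSpace X] : ℕ∞ :=
  sInf {k : ℕ∞ | ∃ n : ℕ, k = n ∧ ASDimLE S X n}

/-- `S₁ ⪯ S₂` : `S₂` is finer than `S₁`. -/
def Preceq (S₁ S₂ : Set (ℝ≥0 → ℝ≥0)) : Prop :=
  ∀ f ∈ S₂, ∃ g ∈ S₁, ∀ᶠ x in atTop, f x ≤ g x

/-- Finite union theorem: if `X = A ∪ B` (with the induced metrics on `A` and `B`),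
then `asdim_S X = max (asdim_S A) (asdim_S B)`. -/
lemma dist_le_of_diam {X : Type*} [MetricSpace X] {U : Set X} {D : ℝ≥0}
    (h : EMetric.diam U ≤ (D : ℝ≥0∞)) {x y : X} (hx : x ∈ U) (hy : y ∈ U) :
    dist x y ≤ (D : ℝ) :=
  dist_le_coe.2 (edist_le_coe.1 (le_trans (EMetric.edist_le_diam_of_mem hx hy) h))

lemma diam_le_of_dist {X : Type*} [MetricSpace X] {U : Set X} {D : ℝ≥0}
    (h : ∀ x ∈ U, ∀ y ∈ U, dist x y ≤ (D : ℝ)) : EMetric.diam U ≤ (D : ℝ≥0∞) :=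
  EMetric.diam_le fun x hx y hy => edist_le_coe.2 (dist_le_coe.1 (h x hx y hy))

lemma sdisjoint_image {X : Type*} [MetricSpace X] {A : Set X} {s : ℝ≥0} {𝒰 : Set (Set A)}
    (h : SDisjoint s 𝒰) : SDisjoint s ((fun U : Set A => ((↑) '' U : Set X)) '' 𝒰) := by
  rintro _ ⟨U, hU, rfl⟩ _ ⟨V, hV, rfl⟩ hne _ ⟨x, hx, rfl⟩ _ ⟨y, hy, rfl⟩
  have hUV : U ≠ V := by rintro rfl; exact hne rfl
  simpa [Subtype.dist_eq] using h U hU V hV hUV x hx y hy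

lemma boundedby_image {X : Type*} [MetricSpace X] {A : Set X} {D : ℝ≥0} {𝒰 : Set (Set A)}
    (h : BoundedBy D 𝒰) : BoundedBy D ((fun U : Set A => ((↑) '' U : Set X)) '' 𝒰) := by
  rintro _ ⟨U, hU, rfl⟩
  exact le_trans (isometry_subtype_coe.ediam_image U).le (h U hU)

lemma asdimle_union {X : Type*} [MetricSpace X] {S : Set (ℝ≥0 → ℝ≥0)}
    (hS : IsControlSemigroup S) {A B : Set X} (hAB : A ∪ B = univ) {n : ℕ}
    (hA : ASDimLE S A n) (hB : ASDimLE S B n) : ASDimLE S X n := by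
  obtain ⟨fA, hfAS, sA, hA⟩ := hA
  obtain ⟨fB, hfBS, sB, hB⟩ := hB
  obtain ⟨fAc, fAm, fAe, fAt⟩ := hS.1 fA hfAS
  obtain ⟨fBc, fBm, fBe, fBt⟩ := hS.1 fB hfBS
  have h3 : (fun x : ℝ≥0 => 3 * x) ∈ S := by
    refine hS.2.1 _ ⟨by continuity, fun a b hab => by show 3 * a ≤ 3 * b; gcongr,
      Eventually.of_forall (fun x => le_mul_of_one_le_left zero_le (by norm_num)),
      tendsto_atTop_mono (fun x => le_mul_of_one_le_left zero_le (by norm_num)) tendsto_id⟩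
      ⟨3, 0, Eventually.of_forall fun x => by ring⟩
  have hgS : (fun x : ℝ≥0 => 3 * x) ∘ fA ∘ ((fun x : ℝ≥0 => 3 * x) ∘ fB) ∈ S :=
    hS.2.2 _ h3 _ (hS.2.2 _ hfAS _ (hS.2.2 _ h3 _ hfBS))
  set g : ℝ≥0 → ℝ≥0 := (fun x : ℝ≥0 => 3 * x) ∘ fA ∘ ((fun x : ℝ≥0 => 3 * x) ∘ fB) with hgdef
  obtain ⟨s₁, hs₁⟩ := eventually_atTop.1 fBe
  obtain ⟨y₀, hy₀⟩ := eventually_atTop.1 fAe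
  obtain ⟨s₂, hs₂⟩ := eventually_atTop.1 (fBt.eventually_ge_atTop y₀)
  refine ⟨g, hgS, max (max sA sB) (max s₁ s₂), fun s hs => ?_⟩
  have hsA : sA ≤ s := le_trans (le_trans (le_max_left _ _) (le_max_left _ _)) hs
  have hsB : sB ≤ s := le_trans (le_trans (le_max_right _ _) (le_max_left _ _)) hs
  have hss₁ : s₁ ≤ s := le_trans (le_trans (le_max_left _ _) (le_max_right _ _)) hs
  have hss₂ : s₂ ≤ s := le_trans (le_trans (le_max_right _ _) (le_max_right _ _)) hs
  set r : ℝ≥0 := fB s with hrdef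
  set t : ℝ≥0 := 2 * s + r with htdef
  have hsr : s ≤ r := hs₁ s hss₁
  have hst : s ≤ t := by
    rw [htdef]
    calc s ≤ 2 * s := le_mul_of_one_le_left zero_le (by norm_num)
      _ ≤ 2 * s + r := le_self_add
  have htA : sA ≤ t := le_trans hsA hst
  obtain ⟨𝒱0, hVcov, hVprop⟩ := hB s hsB
  obtain ⟨𝒰0, hUcov, hUprop⟩ := hA t htA
  set UA : Fin (n + 1) → Set (Set X) :=
    fun i => (fun U : Set A => ((↑) '' U : Set X)) '' 𝒰0 i with hUAdef
  set VB : Fin (n + 1) → Set (Set X) :=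
    fun i => (fun V : Set B => ((↑) '' V : Set X)) '' 𝒱0 i with hVBdef
  have hUdis : ∀ i, SDisjoint t (UA i) := fun i => sdisjoint_image (hUprop i).1
  have hUbdd : ∀ i, BoundedBy (fA t) (UA i) := fun i => boundedby_image (hUprop i).2
  have hVdis : ∀ i, SDisjoint s (VB i) := fun i => sdisjoint_image (hVprop i).1
  have hVbdd : ∀ i, BoundedBy r (VB i) := fun i => boundedby_image (hVprop i).2
  set touch : Set X → Set X → Prop :=
    fun U V => ∃ x ∈ U, ∃ y ∈ V, dist x y ≤ (s : ℝ) with htouchdef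
  set sat : Fin (n + 1) → Set X → Set X :=
    fun i U => U ∪ ⋃₀ {V ∈ VB i | touch U V} with hsatdef
  set W : Fin (n + 1) → Set (Set X) :=
    fun i => (sat i '' UA i) ∪ {V ∈ VB i | ∀ U ∈ UA i, ¬ touch U V} with hWdef
  have htR : (t : ℝ) = 2 * (s : ℝ) + (r : ℝ) := by push_cast [htdef]; ring
  -- no set in VB i touches two distinct sets in UA i
  have hndt : ∀ i, ∀ U ∈ UA i, ∀ U' ∈ UA i, U ≠ U' → ∀ V ∈ VB i,
      touch U V → touch U' V → False := by
    intro i U hU U' hU' hne V hV ⟨x, hx, v, hv, hxv⟩ ⟨x', hx', v', hv', hx'v'⟩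
    have d2 : dist v v' ≤ (r : ℝ) := dist_le_of_diam (hVbdd i V hV) hv hv'
    have tri : dist x x' ≤ dist x v + dist v v' + dist v' x' := dist_triangle4 _ _ _ _
    have big : (t : ℝ) < dist x x' := hUdis i U hU U' hU' hne x hx x' hx'
    rw [htR] at big
    rw [dist_comm v' x'] at tri
    linarith
  refine ⟨W, ?_, fun i => ⟨?_, ?_⟩⟩
  · -- coverage
    apply eq_univ_of_forall
    intro x
    have hx : x ∈ A ∪ B := hAB.symm ▸ mem_univ x
    rcases hx with hxA | hxB
    · have : (⟨x, hxA⟩ : A) ∈ ⋃ i, ⋃₀ 𝒰0 i := by rw [hUcov]; trivial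
      obtain ⟨_, ⟨i, rfl⟩, U0, hU0, hm⟩ := this
      have hUmem : ((↑) '' U0 : Set X) ∈ UA i := ⟨U0, hU0, rfl⟩
      exact mem_iUnion.2 ⟨i, ⟨sat i ((↑) '' U0), Or.inl ⟨_, hUmem, rfl⟩,
        Or.inl ⟨⟨x, hxA⟩, hm, rfl⟩⟩⟩
    · have : (⟨x, hxB⟩ : B) ∈ ⋃ i, ⋃₀ 𝒱0 i := by rw [hVcov]; trivial
      obtain ⟨_, ⟨i, rfl⟩, V0, hV0, hm⟩ := this
      have hVmem : ((↑) '' V0 : Set X) ∈ VB i := ⟨V0, hV0, rfl⟩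
      have hxV : x ∈ ((↑) '' V0 : Set X) := ⟨⟨x, hxB⟩, hm, rfl⟩
      by_cases hT : ∃ U ∈ UA i, touch U ((↑) '' V0)
      · obtain ⟨U, hU, htch⟩ := hT
        exact mem_iUnion.2 ⟨i, ⟨sat i U, Or.inl ⟨U, hU, rfl⟩,
          Or.inr ⟨_, ⟨hVmem, htch⟩, hxV⟩⟩⟩
      · push_neg at hT
        exact mem_iUnion.2 ⟨i, ⟨_, Or.inr ⟨hVmem, hT⟩, hxV⟩⟩
  · -- s-disjointness of W i
    -- claim L : leftover V vs sat i U
    have claimL : ∀ V ∈ VB i, (∀ U ∈ UA i, ¬ touch U V) → ∀ U ∈ UA i,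
        ∀ x ∈ V, ∀ y ∈ sat i U, (s : ℝ) < dist x y := by
      intro V hV hfar U hU x hx y hy
      rcases hy with hyU | ⟨V', ⟨hV', htch'⟩, hyV'⟩
      · have := hfar U hU
        simp only [htouchdef] at this
        push_neg at this
        rw [dist_comm]
        exact this y hyU x hx
      · have hne : V ≠ V' := by rintro rfl; exact hfar U hU htch'
        exact hVdis i V hV V' hV' hne x hx y hyV'
    -- claim M : sat i U vs sat i U' for U ≠ U'
    have claimM : ∀ U ∈ UA i, ∀ U' ∈ UA i, U ≠ U' →
        ∀ x ∈ sat i U, ∀ y ∈ sat i U', (s : ℝ) < dist x y := by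
      intro U hU U' hU' hne x hx y hy
      by_contra hle
      push_neg at hle
      rcases hx with hxU | ⟨V, ⟨hV, htch⟩, hxV⟩ <;>
        rcases hy with hyU | ⟨V', ⟨hV', htch'⟩, hyV'⟩
      · have big := hUdis i U hU U' hU' hne x hxU y hyU
        rw [htR] at big
        have : (0:ℝ) ≤ (s:ℝ) := (s : ℝ≥0).coe_nonneg
        have : (0:ℝ) ≤ (r:ℝ) := (r : ℝ≥0).coe_nonneg
        linarith [NNReal.coe_nonneg s, NNReal.coe_nonneg r]
      · obtain ⟨p', hp', q', hq', hpq'⟩ := htch'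
        have d2 : dist y q' ≤ (r : ℝ) := dist_le_of_diam (hVbdd i V' hV') hyV' hq'
        have tri : dist x p' ≤ dist x y + dist y q' + dist q' p' := dist_triangle4 _ _ _ _
        have big := hUdis i U hU U' hU' hne x hxU p' hp'
        rw [htR] at big
        rw [dist_comm q' p'] at tri
        linarith
      · obtain ⟨p, hp, q, hq, hpq⟩ := htch
        have d2 : dist x q ≤ (r : ℝ) := dist_le_of_diam (hVbdd i V hV) hxV hq
        have tri : dist p y ≤ dist p q + dist q x + dist x y := dist_triangle4 _ _ _ _
        have big := hUdis i U hU U' hU' hne p hp y hyU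
        rw [htR] at big
        rw [dist_comm q x] at tri
        linarith
      · rcases eq_or_ne V V' with rfl | hVne
        · exact hndt i U hU U' hU' hne V hV htch htch'
        · have := hVdis i V hV V' hV' hVne x hxV y hyV'
          linarith
    rintro W₁ hW₁ W₂ hW₂ hne x hx y hy
    rcases hW₁ with ⟨U, hU, rfl⟩ | ⟨hV, hfar⟩ <;> rcases hW₂ with ⟨U', hU', rfl⟩ | ⟨hV', hfar'⟩
    · have hUne : U ≠ U' := by rintro rfl; exact hne rfl
      exact claimM U hU U' hU' hUne x hx y hy
    · rw [dist_comm]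
      exact claimL W₂ hV' hfar' U hU y hy x hx
    · exact claimL W₁ hV hfar U' hU' x hx y hy
    · exact hVdis i W₁ hV W₂ hV' hne x hx y hy
  · -- boundedness of W i by g s
    have hgs : g s = 3 * fA (3 * r) := rfl
    have hc3r : 3 * r ≤ fA (3 * r) := by
      apply hy₀
      calc y₀ ≤ fB s := hs₂ s hss₂
        _ = r := rfl
        _ ≤ 3 * r := le_mul_of_one_le_left zero_le (by norm_num)
    have hfAt : fA t ≤ fA (3 * r) := by
      apply fAm
      rw [htdef]
      calc 2 * s + r ≤ 2 * r + r := by gcongr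
        _ = 3 * r := by ring
    have key : fA t + 2 * s + 2 * r ≤ g s := by
      rw [hgs]
      calc fA t + 2 * s + 2 * r ≤ fA (3 * r) + 2 * r + 2 * r := by gcongr
        _ ≤ fA (3 * r) + 2 * (3 * r) := by
            rw [add_assoc]
            gcongr
            calc 2 * r + 2 * r = 4 * r := by ring
              _ ≤ 6 * r := by gcongr <;> norm_num
              _ = 2 * (3 * r) := by ring
        _ ≤ fA (3 * r) + 2 * fA (3 * r) := by gcongr
        _ = 3 * fA (3 * r) := by ring
    have keyR : (fA t : ℝ) + 2 * (s:ℝ) + 2 * (r:ℝ) ≤ (g s : ℝ) := by exact_mod_cast key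
    have hrgs : (r : ℝ≥0∞) ≤ (g s : ℝ≥0∞) := by
      apply ENNReal.coe_le_coe.2
      calc r ≤ fA t + 2 * s + 2 * r := by
              calc r ≤ 2 * r := le_mul_of_one_le_left zero_le (by norm_num)
                _ ≤ fA t + 2 * s + 2 * r := le_add_self
        _ ≤ g s := key
    rintro W₀ (⟨U, hU, rfl⟩ | ⟨hV, hfar⟩)
    · -- sat i U bounded
      apply diam_le_of_dist
      have hmemdist : ∀ z ∈ sat i U, ∀ w ∈ U, dist z w ≤ (fA t : ℝ) + (s:ℝ) + (r:ℝ) := by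
        intro z hz w hw
        rcases hz with hzU | ⟨V, ⟨hV, htch⟩, hzV⟩
        · have := dist_le_of_diam (hUbdd i U hU) hzU hw
          have h0s := NNReal.coe_nonneg s
          have h0r := NNReal.coe_nonneg r
          linarith
        · obtain ⟨p, hp, q, hq, hpq⟩ := htch
          have d1 : dist z q ≤ (r : ℝ) := dist_le_of_diam (hVbdd i V hV) hzV hq
          have d3 : dist p w ≤ (fA t : ℝ) := dist_le_of_diam (hUbdd i U hU) hp hw
          have tri : dist z w ≤ dist z q + dist q p + dist p w := dist_triangle4 _ _ _ _
          rw [dist_comm q p] at tri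
          linarith
      intro x hx y hy
      rcases hy with hyU | ⟨V', ⟨hV', htch'⟩, hyV'⟩
      · have := hmemdist x hx y hyU
        have h0s := NNReal.coe_nonneg s
        have h0r := NNReal.coe_nonneg r
        linarith
      · obtain ⟨p', hp', q', hq', hpq'⟩ := htch'
        have d1 : dist y q' ≤ (r : ℝ) := dist_le_of_diam (hVbdd i V' hV') hyV' hq'
        have d2 := hmemdist x hx p' hp'
        have tri : dist x y ≤ dist x p' + dist p' q' + dist q' y := dist_triangle4 _ _ _ _
        rw [dist_comm q' y] at tri
        linarith
    · exact le_trans (hVbdd i W₀ hV) hrgs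

lemma asdimle_subset (S : Set (ℝ≥0 → ℝ≥0)) {X : Type*} [MetricSpace X] (A : Set X)
    (n : ℕ) (h : ASDimLE S X n) : ASDimLE S A n := by
  obtain ⟨f, hf, s₀, h⟩ := h
  refine ⟨f, hf, s₀, fun s hs => ?_⟩
  obtain ⟨𝒰, hcov, hprop⟩ := h s hs
  refine ⟨fun i => (fun U => ((↑) ⁻¹' U : Set A)) '' 𝒰 i, ?_, fun i => ⟨?_, ?_⟩⟩
  · apply eq_univ_of_forall
    intro a
    have : (a : X) ∈ ⋃ i, ⋃₀ 𝒰 i := by rw [hcov]; trivial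
    obtain ⟨_, ⟨i, rfl⟩, U, hU, haU⟩ := this
    exact mem_iUnion.2 ⟨i, ⟨_, ⟨U, hU, rfl⟩, haU⟩⟩
  · rintro _ ⟨U, hU, rfl⟩ _ ⟨V, hV, rfl⟩ hne x hx y hy
    have hUV : U ≠ V := by rintro rfl; exact hne rfl
    have := (hprop i).1 U hU V hV hUV x hx y hy
    simpa [Subtype.dist_eq] using this
  · rintro _ ⟨U, hU, rfl⟩
    calc EMetric.diam ((↑) ⁻¹' U : Set A)
        = EMetric.diam ((↑) '' ((↑) ⁻¹' U : Set A) : Set X) :=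
          (isometry_subtype_coe.ediam_image _).symm
      _ ≤ EMetric.diam U := EMetric.diam_mono (image_preimage_subset _ _)
      _ ≤ _ := (hprop i).2 U hU

lemma asdimle_mono (S : Set (ℝ≥0 → ℝ≥0)) {X : Type*} [MetricSpace X]
    {n m : ℕ} (hnm : n ≤ m) (h : ASDimLE S X n) : ASDimLE S X m := by
  obtain ⟨f, hf, s₀, h⟩ := h
  refine ⟨f, hf, s₀, fun s hs => ?_⟩
  obtain ⟨𝒰, hcov, hprop⟩ := h s hs
  refine ⟨fun j => if h : (j : ℕ) < n + 1 then 𝒰 ⟨j, h⟩ else ∅, ?_, fun j => ?_⟩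
  · apply eq_univ_of_forall
    intro x
    have : x ∈ ⋃ i, ⋃₀ 𝒰 i := by rw [hcov]; trivial
    obtain ⟨_, ⟨i, rfl⟩, U, hU, hxU⟩ := this
    refine mem_iUnion.2 ⟨⟨i, lt_of_lt_of_le i.2 (by omega)⟩, ⟨U, ?_, hxU⟩⟩
    simpa [i.2] using hU
  · by_cases hj : (j : ℕ) < n + 1 <;>
      simp only [hj, dif_pos, dif_neg, not_false_iff] <;>
      first
        | exact hprop _
        | exact ⟨fun U hU => absurd hU (notMem_empty U), fun U hU => absurd hU (notMem_empty U)⟩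

lemma asdim_le_iff (S : Set (ℝ≥0 → ℝ≥0)) (X : Type*) [MetricSpace X] (n : ℕ) :
    ASDim S X ≤ (n : ℕ∞) ↔ ASDimLE S X n := by
  constructor
  · intro h
    have hne : {k : ℕ∞ | ∃ m : ℕ, k = m ∧ ASDimLE S X m}.Nonempty := by
      by_contra hemp
      rw [not_nonempty_iff_eq_empty] at hemp
      have h' : sInf {k : ℕ∞ | ∃ m : ℕ, k = m ∧ ASDimLE S X m} ≤ (n : ℕ∞) := h
      rw [hemp, sInf_empty] at h'
      exact absurd h' (by simp)
    obtain ⟨m, hm, hdm⟩ := csInf_mem hne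
    have h' : sInf {k : ℕ∞ | ∃ m : ℕ, k = m ∧ ASDimLE S X m} ≤ (n : ℕ∞) := h
    rw [hm] at h'
    exact asdimle_mono S (by exact_mod_cast h') hdm
  · intro h
    exact csInf_le (OrderBot.bddBelow _) ⟨n, rfl, h⟩


theorem asdim_union (S : Set (ℝ≥0 → ℝ≥0)) (hS : IsControlSemigroup S)
    (X : Type*) [MetricSpace X] (A B : Set X) (hAB : A ∪ B = univ) :
    ASDim S X = max (ASDim S A) (ASDim S B) := by
  apply le_antisymm
  · rcases eq_or_ne (max (ASDim S A) (ASDim S B)) ⊤ with hmax | hmax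
    · rw [hmax]; exact le_top
    · lift max (ASDim S A) (ASDim S B) to ℕ using hmax with n hn
      have hAn : ASDimLE S A n :=
        (asdim_le_iff S A n).1 (hn ▸ le_max_left _ _)
      have hBn : ASDimLE S B n :=
        (asdim_le_iff S B n).1 (hn ▸ le_max_right _ _)
      exact (asdim_le_iff S X n).2 (asdimle_union hS hAB hAn hBn)
  · apply max_le <;>
    · apply sInf_le_sInf
      rintro k ⟨m, rfl, hm⟩
      exact ⟨m, rfl, asdimle_subset S _ m hm⟩
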